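/- arXiv:1304.5822 — 3 statements merged into one kernel-verified Lean document; each statement's English description precedes it below -/
import Mathlib

section
/- Fix i ∈ {1,…,n} and let d_i' satisfy d_i < d_i' < d_0. Let x* be the unique fixed point of the instance with values (d_0, d_1,…,d_i,…,d_n) and x*' the unique fixed point of the instance where d_i is replaced by d_i' (all other values unchanged). Then x*'_j > x*_j for every j = 1,…,i; consequently the value reaching node i strictly increases: w*'_i = d_0·∏_{j=1}^{i} x*'_j > d_0·∏_{j=1}^{i} x*_j = w*_i. -/
/-- `pathW d x i` is the value `w_i = d_0 · ∏_{j=1}^{i} x_j` reaching node `i`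
in a path bargaining instance with values `d` and shares `x`. -/
noncomputable def pathW (d x : ℕ → ℝ) (i : ℕ) : ℝ :=
  d 0 * ∏ j ∈ Finset.Icc 1 i, x j

/-- A share vector: `x_i ∈ [0,1]` for `i = 1,…,n`. -/
def IsShareVector (n : ℕ) (x : ℕ → ℝ) : Prop :=
  ∀ i, 1 ≤ i → i ≤ n → 0 ≤ x i ∧ x i ≤ 1

/-- A fixed point of the path bargaining equations
`(1 − x_i)·w_{i−1} = (1 − x_{i+1})·(x_i·w_{i−1} − d_i)` for `i = 1,…,n`,
with the convention `x_{n+1} = 0`. -/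
def IsPathFixedPoint (n : ℕ) (d x : ℕ → ℝ) : Prop :=
  IsShareVector n x ∧
  ∀ i, 1 ≤ i → i ≤ n →
    (1 - x i) * pathW d x (i - 1) =
      (1 - (if i = n then 0 else x (i + 1))) * (x i * pathW d x (i - 1) - d i)

lemma pathW_succ (d x : ℕ → ℝ) (j : ℕ) (hj : 1 ≤ j) :
    pathW d x j = pathW d x (j-1) * x j := by
  obtain ⟨k, rfl⟩ : ∃ k, j = k + 1 := ⟨j - 1, by omega⟩
  simp only [pathW, Nat.add_sub_cancel]
  rw [Finset.prod_Icc_succ_top (by omega)]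
  ring

lemma downward_induction (P : ℕ → Prop) (a b : ℕ) (hb : P b)
    (step : ∀ j, a ≤ j → j < b → P (j+1) → P j) : ∀ j, a ≤ j → j ≤ b → P j := by
  have H : ∀ k j, a ≤ j → j ≤ b → b - j ≤ k → P j := by
    intro k
    induction k with
    | zero => intro j h1 h2 h3; exact (by omega : j = b) ▸ hb
    | succ k ih =>
      intro j h1 h2 h3
      rcases eq_or_lt_of_le h2 with rfl | h
      · exact hb
      · exact step j h1 h (ih (j+1) (by omega) (by omega) (by omega))
  exact fun j h1 h2 => H (b - j) j h1 h2 le_rfl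

lemma fp_facts (n : ℕ) (hn : 1 ≤ n) (d x : ℕ → ℝ) (hd0 : 0 < d 0)
    (hd : ∀ j, 1 ≤ j → j ≤ n → 0 ≤ d j ∧ d j < d 0)
    (hx : IsPathFixedPoint n d x) :
    (∀ j, j ≤ n → 0 < pathW d x j) ∧
    (∀ j, 1 ≤ j → j ≤ n → 0 < x j ∧ x j < 1 ∧ d j < pathW d x j) := by
  obtain ⟨hsv, heq⟩ := hx
  have hX : ∀ j, 1 ≤ j → j ≤ n →
      0 ≤ (if j = n then 0 else x (j+1)) ∧ (if j = n then 0 else x (j+1)) ≤ 1 := by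
    intro j h1 h2
    split
    · exact ⟨le_rfl, zero_le_one⟩
    · exact hsv (j+1) (by omega) (by omega)
  have pos : ∀ j, j ≤ n → 0 < pathW d x j ∧ (1 ≤ j → 0 < x j) := by
    intro j
    induction j with
    | zero => intro _; exact ⟨by simpa [pathW] using hd0, by omega⟩
    | succ k ih =>
      intro h
      have hk := (ih (by omega)).1
      have hxk : 0 < x (k+1) := by
        rcases lt_or_ge 0 (x (k+1)) with h' | h'
        · exact h'
        · exfalso
          have hx0 : x (k+1) = 0 := le_antisymm h' (hsv (k+1) (by omega) h).1
          have he := heq (k+1) (by omega) h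
          have hXk := hX (k+1) (by omega) h
          rw [hx0] at he
          simp only [Nat.add_sub_cancel] at he
          have hdk := hd (k+1) (by omega) h
          nlinarith [hXk.1, hXk.2, hdk.1]
      refine ⟨?_, fun _ => hxk⟩
      rw [pathW_succ d x (k+1) (by omega)]
      simp only [Nat.add_sub_cancel]
      exact mul_pos hk hxk
  have casc : ∀ j, j ≤ n → x j = 1 → ∀ k, 1 ≤ k → k ≤ j → x k = 1 := by
    intro j
    induction j with
    | zero => intro _ _ k h1 h2; omega
    | succ m ih =>
      intro hjn hx1 k hk1 hk2
      rcases eq_or_lt_of_le hk2 with rfl | hk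
      · exact hx1
      · have hm1 : 1 ≤ m := by omega
        have hxm : x m = 1 := by
          have he := heq m hm1 (by omega)
          rw [if_neg (by omega : ¬ m = n), hx1] at he
          have hW := (pos (m-1) (by omega)).1
          have h0 : (1 - x m) * pathW d x (m-1) = 0 := by rw [he]; ring
          rcases mul_eq_zero.1 h0 with h | h
          · linarith
          · linarith
        exact ih (by omega) hxm k hk1 (by omega)
  have cascW : ∀ j, j ≤ n → x j = 1 → pathW d x j = d 0 := by
    intro j hj hx1
    have h := casc j hj hx1
    have hp : ∏ k ∈ Finset.Icc 1 j, x k = 1 :=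
      Finset.prod_eq_one (fun k hk => h k (Finset.mem_Icc.1 hk).1 (Finset.mem_Icc.1 hk).2)
    rw [pathW, hp, mul_one]
  have Q : ∀ j, 1 ≤ j → j ≤ n → (x j < 1 ∧ d j < pathW d x j) := by
    refine downward_induction (fun j => x j < 1 ∧ d j < pathW d x j) 1 n ?_ ?_
    · -- base j = n
      have he := heq n hn le_rfl
      rw [if_pos rfl] at he
      have hW1 := (pos (n-1) (by omega)).1
      have hWn : pathW d x n = pathW d x (n-1) * x n := pathW_succ d x n hn
      have hxn1 : x n ≤ 1 := (hsv n hn le_rfl).2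
      have hlt : x n < 1 := by
        rcases eq_or_lt_of_le hxn1 with h1 | h1
        · exfalso
          have h2 : pathW d x n = d n := by rw [hWn]; nlinarith [he]
          have h3 := cascW n le_rfl h1
          have h4 := (hd n hn le_rfl).2
          rw [h2] at h3; linarith
        · exact h1
      refine ⟨hlt, ?_⟩
      rw [hWn]
      nlinarith [mul_pos (show (0:ℝ) < 1 - x n by linarith) hW1, he]
    · -- step
      intro j h1j hjn ih
      obtain ⟨hx1, hd1⟩ := ih
      have he := heq j h1j (le_of_lt hjn)
      rw [if_neg (by omega : ¬ j = n)] at he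
      have hW1 := (pos (j-1) (by omega)).1
      have hWj : pathW d x j = pathW d x (j-1) * x j := pathW_succ d x j h1j
      have hxj1 : x j ≤ 1 := (hsv j h1j (by omega)).2
      have hlt : x j < 1 := by
        rcases eq_or_lt_of_le hxj1 with h1 | h1
        · exfalso
          have h3 : (1 - x (j+1)) * (pathW d x j - d j) = 0 := by rw [hWj]; nlinarith [he]
          have h2 : pathW d x j = d j := by
            rcases mul_eq_zero.1 h3 with h | h
            · linarith
            · linarith
          have h4 := cascW j (by omega) h1
          have h5 := (hd j h1j (by omega)).2
          rw [h2] at h4; linarith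
        · exact h1
      refine ⟨hlt, ?_⟩
      by_contra hcon
      push_neg at hcon
      nlinarith [mul_pos (show (0:ℝ) < 1 - x j by linarith) hW1, he, hWj]
  exact ⟨fun j hj => (pos j hj).1, fun j h1 h2 => ⟨(pos j h2).2 h1, (Q j h1 h2).1, (Q j h1 h2).2⟩⟩

lemma fp_rec (n : ℕ) (d x : ℕ → ℝ)
    (hx : IsPathFixedPoint n d x) (j : ℕ) (h1 : 1 ≤ j) (h2 : j ≤ n) :
    (pathW d x (j-1) - pathW d x j) * pathW d x j
      = (if j + 1 ≤ n then pathW d x j - pathW d x (j+1) else pathW d x n)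
          * (pathW d x j - d j) := by
  have he := hx.2 j h1 h2
  have hW1 : pathW d x j = pathW d x (j-1) * x j := pathW_succ d x j h1
  rcases eq_or_lt_of_le h2 with rfl | hlt
  · rw [if_pos rfl] at he
    rw [if_neg (show ¬ (j+1 ≤ j) by omega), hW1]
    linear_combination (pathW d x (j-1) * x j) * he
  · rw [if_neg (by omega : ¬ j = n)] at he
    rw [if_pos (by omega)]
    have hW2 : pathW d x (j+1) = pathW d x j * x (j+1) := by
      simpa using pathW_succ d x (j+1) (by omega)
    rw [hW2, hW1]
    linear_combination (pathW d x (j-1) * x j) * he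

lemma mono_step (dd A B a b p q : ℝ) (hA : 0 < A) (hB : 0 < B)
    (hd : 0 ≤ dd) (hdA : dd < A) (hAB : A ≤ B) (hab : a ≤ b) (ha : 0 < a)
    (hp : p * A = a * (A - dd)) (hq : q * B = b * (B - dd)) : p ≤ q := by
  have hb0 : 0 < b := lt_of_lt_of_le ha hab
  have e1 : p * (A * B) = a * ((A - dd) * B) := by linear_combination B * hp
  have e2 : q * (A * B) = b * ((B - dd) * A) := by linear_combination A * hq
  have e3 : (A - dd) * B ≤ (B - dd) * A := by nlinarith [mul_nonneg hd (sub_nonneg.2 hAB)]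
  have e4 : a * ((A - dd) * B) ≤ b * ((B - dd) * A) := by
    calc a * ((A - dd) * B) ≤ b * ((A - dd) * B) :=
          mul_le_mul_of_nonneg_right hab (mul_nonneg (by linarith) (le_of_lt hB))
      _ ≤ b * ((B - dd) * A) := mul_le_mul_of_nonneg_left e3 (le_of_lt hb0)
  have e5 : p * (A * B) ≤ q * (A * B) := by rw [e1, e2]; exact e4
  exact le_of_mul_le_mul_right e5 (by positivity)

lemma mono_step_lt (dd A B a b p q : ℝ) (hA : 0 < A) (hB : 0 < B)
    (hd : 0 ≤ dd) (hdA : dd < A) (hAB : A ≤ B) (hab : a < b) (ha : 0 < a)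
    (hp : p * A = a * (A - dd)) (hq : q * B = b * (B - dd)) : p < q := by
  have hb0 : 0 < b := lt_trans ha hab
  have e1 : p * (A * B) = a * ((A - dd) * B) := by linear_combination B * hp
  have e2 : q * (A * B) = b * ((B - dd) * A) := by linear_combination A * hq
  have e3 : (A - dd) * B ≤ (B - dd) * A := by nlinarith [mul_nonneg hd (sub_nonneg.2 hAB)]
  have e4 : a * ((A - dd) * B) < b * ((B - dd) * A) := by
    calc a * ((A - dd) * B) < b * ((A - dd) * B) :=
          mul_lt_mul_of_pos_right hab (mul_pos (by linarith) hB)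
      _ ≤ b * ((B - dd) * A) := mul_le_mul_of_nonneg_left e3 (le_of_lt hb0)
  have e5 : p * (A * B) < q * (A * B) := by rw [e1, e2]; exact e4
  exact lt_of_mul_lt_mul_right e5 (by positivity)

lemma mono_step_i (dd ee A B a b p q : ℝ) (hA : 0 < A) (hB : 0 < B)
    (hd : 0 ≤ dd) (hde : dd < ee) (heA : ee < A) (hAB : A ≤ B) (hab : a ≤ b) (ha : 0 < a)
    (hp : p * A = a * (A - ee)) (hq : q * B = b * (B - dd)) : p < q := by
  have hb0 : 0 < b := lt_of_lt_of_le ha hab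
  have e1 : p * (A * B) = a * ((A - ee) * B) := by linear_combination B * hp
  have e2 : q * (A * B) = b * ((B - dd) * A) := by linear_combination A * hq
  have e3 : (A - ee) * B < (B - dd) * A := by
    nlinarith [mul_nonneg hd (sub_nonneg.2 hAB), mul_lt_mul_of_pos_right hde hB]
  have e4 : a * ((A - ee) * B) < b * ((B - dd) * A) := by
    calc a * ((A - ee) * B) ≤ b * ((A - ee) * B) :=
          mul_le_mul_of_nonneg_right hab (mul_nonneg (by linarith) (le_of_lt hB))
      _ < b * ((B - dd) * A) := mul_lt_mul_of_pos_left e3 hb0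
  have e5 : p * (A * B) < q * (A * B) := by rw [e1, e2]; exact e4
  exact lt_of_mul_lt_mul_right e5 (by positivity)

set_option maxHeartbeats 2000000 in
lemma key (n i : ℕ) (hi1 : 1 ≤ i) (hin : i ≤ n)
    (d e W V u v : ℕ → ℝ)
    (hW0 : W 0 = V 0)
    (hWpos : ∀ j, j ≤ n → 0 < W j) (hVpos : ∀ j, j ≤ n → 0 < V j)
    (hWu : ∀ j, 1 ≤ j → j ≤ n → W (j-1) = W j + u j)
    (hVv : ∀ j, 1 ≤ j → j ≤ n → V (j-1) = V j + v j)
    (hupos : ∀ j, 1 ≤ j → j ≤ n+1 → 0 < u j) (hvpos : ∀ j, 1 ≤ j → j ≤ n+1 → 0 < v j)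
    (huW : ∀ j, 1 ≤ j → j ≤ n → u j * W j = u (j+1) * (W j - d j))
    (hvV : ∀ j, 1 ≤ j → j ≤ n → v j * V j = v (j+1) * (V j - e j))
    (hun1 : u (n+1) = W n) (hvn1 : v (n+1) = V n)
    (hd0 : ∀ j, 1 ≤ j → j ≤ n → 0 ≤ d j)
    (hdW : ∀ j, 1 ≤ j → j ≤ n → d j < W j) (heV : ∀ j, 1 ≤ j → j ≤ n → e j < V j)
    (hde : ∀ j, 1 ≤ j → j ≤ n → j ≠ i → e j = d j)
    (hdei : d i < e i) :
    (∀ j, 1 ≤ j → j ≤ i → W j * V (j-1) < V j * W (j-1)) ∧ W i < V i := by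
  -- Step A : W n < V n
  have hAn : W n < V n := by
    by_contra hcontra
    push_neg at hcontra   -- V n ≤ W n
    have T1 : ∀ j, i ≤ j → j ≤ n → (V j ≤ W j ∧ v (j+1) ≤ u (j+1)) := by
      refine downward_induction _ i n ⟨hcontra, by rw [hun1, hvn1]; exact hcontra⟩ ?_
      rintro j hij hjn ⟨h1, h2⟩
      have hu := huW (j+1) (by omega) (by omega)
      have hv := hvV (j+1) (by omega) (by omega)
      rw [hde (j+1) (by omega) (by omega) (by omega)] at hv
      have hdA : d (j+1) < V (j+1) := by
        rw [← hde (j+1) (by omega) (by omega) (by omega)]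
        exact heV (j+1) (by omega) (by omega)
      have hsec : v (j+1) ≤ u (j+1) :=
        mono_step (d (j+1)) (V (j+1)) (W (j+1)) (v (j+2)) (u (j+2)) (v (j+1)) (u (j+1))
          (hVpos (j+1) (by omega)) (hWpos (j+1) (by omega))
          (hd0 (j+1) (by omega) (by omega)) hdA h1 h2
          (hvpos (j+2) (by omega) (by omega)) hv hu
      have hWj : W j = W (j+1) + u (j+1) := by simpa using hWu (j+1) (by omega) (by omega)
      have hVj : V j = V (j+1) + v (j+1) := by simpa using hVv (j+1) (by omega) (by omega)
      exact ⟨by rw [hWj, hVj]; linarith, hsec⟩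
    obtain ⟨hVi, hvui⟩ := T1 i le_rfl hin
    have hvi : v i < u i :=
      mono_step_i (d i) (e i) (V i) (W i) (v (i+1)) (u (i+1)) (v i) (u i)
        (hVpos i (by omega)) (hWpos i (by omega)) (hd0 i hi1 hin) hdei
        (heV i hi1 hin) hVi hvui (hvpos (i+1) (by omega) (by omega))
        (hvV i hi1 hin) (huW i hi1 hin)
    have T2 : ∀ j, 0 ≤ j → j ≤ i-1 → (V j < W j ∧ v (j+1) < u (j+1)) := by
      refine downward_induction _ 0 (i-1) ?_ ?_
      · have hii : i - 1 + 1 = i := by omega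
        rw [hii]
        refine ⟨?_, hvi⟩
        have hWj := hWu i hi1 hin
        have hVj := hVv i hi1 hin
        rw [hWj, hVj]; linarith
      · rintro j hj0 hji ⟨h1, h2⟩
        have hu := huW (j+1) (by omega) (by omega)
        have hv := hvV (j+1) (by omega) (by omega)
        rw [hde (j+1) (by omega) (by omega) (by omega)] at hv
        have hdA : d (j+1) < V (j+1) := by
          rw [← hde (j+1) (by omega) (by omega) (by omega)]
          exact heV (j+1) (by omega) (by omega)
        have hsec : v (j+1) < u (j+1) :=
          mono_step_lt (d (j+1)) (V (j+1)) (W (j+1)) (v (j+2)) (u (j+2)) (v (j+1)) (u (j+1))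
            (hVpos (j+1) (by omega)) (hWpos (j+1) (by omega))
            (hd0 (j+1) (by omega) (by omega)) hdA (le_of_lt h1) h2
            (hvpos (j+2) (by omega) (by omega)) hv hu
        have hWj : W j = W (j+1) + u (j+1) := by simpa using hWu (j+1) (by omega) (by omega)
        have hVj : V j = V (j+1) + v (j+1) := by simpa using hVv (j+1) (by omega) (by omega)
        exact ⟨by rw [hWj, hVj]; linarith, hsec⟩
    have h0 := (T2 0 le_rfl (by omega)).1
    rw [hW0] at h0
    exact lt_irrefl _ h0
  -- Step B : top region, W j < V j for i ≤ j ≤ n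
  have T3 : ∀ j, i ≤ j → j ≤ n → (W j < V j ∧ u (j+1) < v (j+1)) := by
    refine downward_induction _ i n ⟨hAn, by rw [hun1, hvn1]; exact hAn⟩ ?_
    rintro j hij hjn ⟨h1, h2⟩
    have hu := huW (j+1) (by omega) (by omega)
    have hv := hvV (j+1) (by omega) (by omega)
    rw [hde (j+1) (by omega) (by omega) (by omega)] at hv
    have hsec : u (j+1) < v (j+1) :=
      mono_step_lt (d (j+1)) (W (j+1)) (V (j+1)) (u (j+2)) (v (j+2)) (u (j+1)) (v (j+1))
        (hWpos (j+1) (by omega)) (hVpos (j+1) (by omega))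
        (hd0 (j+1) (by omega) (by omega)) (hdW (j+1) (by omega) (by omega)) (le_of_lt h1) h2
        (hupos (j+2) (by omega) (by omega)) hu hv
    have hWj : W j = W (j+1) + u (j+1) := by simpa using hWu (j+1) (by omega) (by omega)
    have hVj : V j = V (j+1) + v (j+1) := by simpa using hVv (j+1) (by omega) (by omega)
    exact ⟨by rw [hWj, hVj]; linarith, hsec⟩
  -- Step C : main claim
  have G : ∀ j, 1 ≤ j → j ≤ i → v j * W j < u j * V j := by
    by_contra hcon
    push_neg at hcon
    obtain ⟨j0, hj01, hj0i, hj0⟩ := hcon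
    obtain ⟨m, hm1, hmi, hmge, hmax⟩ :
        ∃ m, 1 ≤ m ∧ m ≤ i ∧ u m * V m ≤ v m * W m ∧
          ∀ j, m < j → j ≤ i → v j * W j < u j * V j := by
      classical
      refine ⟨Nat.findGreatest (fun j => u j * V j ≤ v j * W j) i,
        le_trans hj01 (Nat.le_findGreatest hj0i hj0), Nat.findGreatest_le i,
        Nat.findGreatest_spec (P := fun j => u j * V j ≤ v j * W j) hj0i hj0, ?_⟩
      intro j hj1 hj2
      by_contra hh
      push_neg at hh
      exact Nat.findGreatest_is_greatest hj1 hj2 hh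
    rcases le_or_gt (V m) (W m) with hVW | hWV
    · rcases eq_or_lt_of_le hmi with heq | hmlt
      · rw [heq] at hVW
        exact absurd (T3 i le_rfl hin).1 (not_lt.2 hVW)
      · have hG1 := hmax (m+1) (by omega) (by omega)
        have hWm : W m = W (m+1) + u (m+1) := by simpa using hWu (m+1) (by omega) (by omega)
        have hVm : V m = V (m+1) + v (m+1) := by simpa using hVv (m+1) (by omega) (by omega)
        have hb : v (m+1) * W m < u (m+1) * V m := by rw [hWm, hVm]; nlinarith [hG1]
        have hu := huW m hm1 (by omega)
        have hv := hvV m hm1 (by omega)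
        rw [hde m hm1 (by omega) (by omega)] at hv
        have hVp := hVpos m (by omega)
        have hWp := hWpos m (by omega)
        have hvp := hvpos (m+1) (by omega) (by omega)
        have hup := hupos (m+1) (by omega) (by omega)
        have hum := hupos m hm1 (by omega)
        have hdp := hd0 m hm1 (by omega)
        have hq : v m * u (m+1) ≤ u m * v (m+1) := by
          have e1 : (v m * u (m+1)) * (V m * W m) = (v (m+1) * u (m+1)) * ((V m - d m) * W m) := by
            linear_combination (u (m+1) * W m) * hv
          have e2 : (u m * v (m+1)) * (V m * W m) = (v (m+1) * u (m+1)) * ((W m - d m) * V m) := by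
            linear_combination (v (m+1) * V m) * hu
          have e3 : (V m - d m) * W m ≤ (W m - d m) * V m := by
            nlinarith [mul_nonneg hdp (sub_nonneg.2 hVW)]
          have e4 : (v m * u (m+1)) * (V m * W m) ≤ (u m * v (m+1)) * (V m * W m) := by
            rw [e1, e2]
            exact mul_le_mul_of_nonneg_left e3 (by positivity)
          exact le_of_mul_le_mul_right e4 (by positivity)
        have A1 : (u m * V m) * u (m+1) ≤ (v m * W m) * u (m+1) :=
          mul_le_mul_of_nonneg_right hmge (le_of_lt hup)
        have A2 : (v m * u (m+1)) * W m ≤ (u m * v (m+1)) * W m :=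
          mul_le_mul_of_nonneg_right hq (le_of_lt hWp)
        have A3 : u m * (v (m+1) * W m) < u m * (u (m+1) * V m) :=
          mul_lt_mul_of_pos_left hb hum
        nlinarith [A1, A2, A3]
    · have D : ∀ j, 0 ≤ j → j ≤ m → (W j < V j ∧ (1 ≤ j → u j * V j ≤ v j * W j)) := by
        refine downward_induction _ 0 m ⟨hWV, fun _ => hmge⟩ ?_
        rintro j hj0 hjm ⟨h1, h2⟩
        have h2' := h2 (by omega)
        have hWj : W j = W (j+1) + u (j+1) := by simpa using hWu (j+1) (by omega) (by omega)
        have hVj : V j = V (j+1) + v (j+1) := by simpa using hVv (j+1) (by omega) (by omega)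
        have hWp := hWpos (j+1) (by omega)
        have hVp := hVpos (j+1) (by omega)
        have hup := hupos (j+1) (by omega) (by omega)
        have hvp := hvpos (j+1) (by omega) (by omega)
        have huv : u (j+1) < v (j+1) := by
          nlinarith [mul_lt_mul_of_pos_left h1 hvp, hVp, h2']
        have hfst : W j < V j := by rw [hWj, hVj]; linarith
        refine ⟨hfst, fun hj1 => ?_⟩
        have hra : u (j+1) * V j ≤ v (j+1) * W j := by rw [hWj, hVj]; nlinarith [h2']
        have hu := huW j hj1 (by omega)
        have hv := hvV j hj1 (by omega)
        rw [hde j hj1 (by omega) (by omega)] at hv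
        have hdp := hd0 j hj1 (by omega)
        have hWjp := hWpos j (by omega)
        have hVjp := hVpos j (by omega)
        have hujp := hupos j hj1 (by omega)
        have hq : u j * v (j+1) ≤ v j * u (j+1) := by
          have e1 : (u j * v (j+1)) * (W j * V j) = (u (j+1) * v (j+1)) * ((W j - d j) * V j) := by
            linear_combination (v (j+1) * V j) * hu
          have e2 : (v j * u (j+1)) * (W j * V j) = (u (j+1) * v (j+1)) * ((V j - d j) * W j) := by
            linear_combination (u (j+1) * W j) * hv
          have e3 : (W j - d j) * V j ≤ (V j - d j) * W j := by
            nlinarith [mul_nonneg hdp (le_of_lt (sub_pos.2 hfst))]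
          have e4 : (u j * v (j+1)) * (W j * V j) ≤ (v j * u (j+1)) * (W j * V j) := by
            rw [e1, e2]
            exact mul_le_mul_of_nonneg_left e3 (by positivity)
          exact le_of_mul_le_mul_right e4 (by positivity)
        have B1 : (u (j+1) * V j) * u j ≤ (v (j+1) * W j) * u j :=
          mul_le_mul_of_nonneg_right hra (le_of_lt hujp)
        have B2 : (u j * v (j+1)) * W j ≤ (v j * u (j+1)) * W j :=
          mul_le_mul_of_nonneg_right hq (le_of_lt hWjp)
        have e5 : (u j * V j) * u (j+1) ≤ (v j * W j) * u (j+1) := by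
          nlinarith [B1, B2]
        exact le_of_mul_le_mul_right e5 hup
      have hfin := (D 0 le_rfl (by omega)).1
      rw [hW0] at hfin
      exact lt_irrefl _ hfin
  refine ⟨?_, (T3 i le_rfl hin).1⟩
  intro j hj1 hji
  have hGj := G j hj1 hji
  have hWj := hWu j hj1 (by omega)
  have hVj := hVv j hj1 (by omega)
  rw [hWj, hVj]
  nlinarith [hGj]


/-- Increasing `d i` (keeping it below `d 0`) strictly increases every fixed-point
share `x j` for `j ≤ i`, and hence the value reaching node `i`. -/
theorem shares_below_increase (n : ℕ) (hn : 1 ≤ n) (d : ℕ → ℝ)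
    (hd0 : 0 < d 0) (hd : ∀ j, 1 ≤ j → j ≤ n → 0 ≤ d j ∧ d j < d 0)
    (i : ℕ) (hi1 : 1 ≤ i) (hin : i ≤ n)
    (d' : ℝ) (hdi : d i < d') (hd'0 : d' < d 0)
    (x x' : ℕ → ℝ)
    (hx : IsPathFixedPoint n d x)
    (hx' : IsPathFixedPoint n (Function.update d i d') x') :
    (∀ j, 1 ≤ j → j ≤ i → x j < x' j) ∧
      pathW d x i < pathW (Function.update d i d') x' i := by
  set e := Function.update d i d' with hedef
  have he0 : e 0 = d 0 := by
    rw [hedef]; exact Function.update_of_ne (by omega) _ _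
  have hei : e i = d' := by rw [hedef]; exact Function.update_self i d' d
  have hej : ∀ j, j ≠ i → e j = d j := by
    intro j h; rw [hedef]; exact Function.update_of_ne h _ _
  have hde' : ∀ j, 1 ≤ j → j ≤ n → 0 ≤ e j ∧ e j < e 0 := by
    intro j h1 h2
    rw [he0]
    rcases eq_or_ne j i with rfl | hne
    · rw [hei]; exact ⟨le_trans (hd j h1 h2).1 (le_of_lt hdi), hd'0⟩
    · rw [hej j hne]; exact hd j h1 h2
  have he0pos : 0 < e 0 := by rw [he0]; exact hd0
  obtain ⟨hWpos, hWfact⟩ := fp_facts n hn d x hd0 hd hx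
  obtain ⟨hVpos, hVfact⟩ := fp_facts n hn e x' he0pos hde' hx'
  have hkey := key n i hi1 hin d e (pathW d x) (pathW e x')
    (fun j => if j ≤ n then pathW d x (j-1) - pathW d x j else pathW d x n)
    (fun j => if j ≤ n then pathW e x' (j-1) - pathW e x' j else pathW e x' n)
    (by simp [pathW, he0])
    hWpos hVpos
    (by intro j h1 h2; beta_reduce; rw [if_pos h2]; ring)
    (by intro j h1 h2; beta_reduce; rw [if_pos h2]; ring)
    (by
      intro j h1 h2
      beta_reduce
      by_cases hj : j ≤ n
      · rw [if_pos hj]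
        have hs := pathW_succ d x j h1
        have hx1 := (hWfact j h1 hj).2.1
        have hp := hWpos (j-1) (by omega)
        rw [hs]
        nlinarith
      · rw [if_neg hj]; exact hWpos n le_rfl)
    (by
      intro j h1 h2
      beta_reduce
      by_cases hj : j ≤ n
      · rw [if_pos hj]
        have hs := pathW_succ e x' j h1
        have hx1 := (hVfact j h1 hj).2.1
        have hp := hVpos (j-1) (by omega)
        rw [hs]
        nlinarith
      · rw [if_neg hj]; exact hVpos n le_rfl)
    (by
      intro j h1 h2
      beta_reduce
      rw [if_pos h2]
      simp only [Nat.add_sub_cancel]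
      exact fp_rec n d x hx j h1 h2)
    (by
      intro j h1 h2
      beta_reduce
      rw [if_pos h2]
      simp only [Nat.add_sub_cancel]
      exact fp_rec n e x' hx' j h1 h2)
    (by beta_reduce; rw [if_neg (by omega)])
    (by beta_reduce; rw [if_neg (by omega)])
    (fun j h1 h2 => (hd j h1 h2).1)
    (fun j h1 h2 => (hWfact j h1 h2).2.2)
    (fun j h1 h2 => (hVfact j h1 h2).2.2)
    (fun j h1 h2 hne => hej j hne)
    (by rw [hei]; exact hdi)
  refine ⟨?_, hkey.2⟩
  intro j h1 h2
  have h := hkey.1 j h1 h2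
  have hsW := pathW_succ d x j h1
  have hsV := pathW_succ e x' j h1
  have hWp : 0 < pathW d x (j-1) := hWpos _ (by omega)
  have hVp : 0 < pathW e x' (j-1) := hVpos _ (by omega)
  rw [hsW, hsV] at h
  nlinarith [h, mul_pos hWp hVp]
end

section
/- Feasibility is preserved when the top value increases: suppose x_1 ∈ [0,1] is feasible for the instance with values (d_0, d_1,…,d_n), and let d_0' > d_0. Then x_1 is also feasible for the instance with values (d_0', d_1,…,d_n); moreover, writing x_i, w_i and x_i', w_i' for the upward-equation values in the two instances, one has x_i' ≥ x_i and w_i' > w_i for all i = 1,…,n. -/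
/-- `upP d x1 i = (w_i, w_{i+1})`: the pair of consecutive values reaching nodes
`i` and `i+1`, computed from `x_1 = x1` via the upward equations
`x_{i+1} = 1 − ((1 − x_i)·w_{i−1})/(x_i·w_{i−1} − d_i)`, i.e.
`w_{i+1} = w_i · (1 − (w_{i−1} − w_i)/(w_i − d_i))` (using `w_i = x_i·w_{i−1}`). -/
noncomputable def upP (d : ℕ → ℝ) (x1 : ℝ) : ℕ → ℝ × ℝ
  | 0 => (d 0, d 0 * x1)
  | i + 1 =>
      let p := upP d x1 i
      (p.2, p.2 * (1 - (p.1 - p.2) / (p.2 - d (i + 1))))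

/-- `upW d x1 i = w_i`, the value reaching node `i` under the upward equations
started at `x_1 = x1`. -/
noncomputable def upW (d : ℕ → ℝ) (x1 : ℝ) (i : ℕ) : ℝ :=
  (upP d x1 i).1

/-- `upX d x1 i = x_i`, the share on edge `e_i` computed from `x_1 = x1` by the
upward equations `x_{i+1} = 1 − ((1 − x_i)·w_{i−1})/(x_i·w_{i−1} − d_i)`
(rewritten as `x_{i+1} = 1 − (w_{i−1} − w_i)/(w_i − d_i)`). -/
noncomputable def upX (d : ℕ → ℝ) (x1 : ℝ) : ℕ → ℝ
  | 0 => 1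
  | 1 => x1
  | i + 2 => 1 - (upW d x1 i - upW d x1 (i + 1)) / (upW d x1 (i + 1) - d (i + 1))

/-- `x1` is feasible: `x1 ∈ [0,1]` and the values produced by the upward
equations satisfy `x_i ∈ [0,1]` and `w_i > d_i` for all `i = 1,…,n`. -/
def Feasible (n : ℕ) (d : ℕ → ℝ) (x1 : ℝ) : Prop :=
  0 ≤ x1 ∧ x1 ≤ 1 ∧
    ∀ i, 1 ≤ i → i ≤ n → (0 ≤ upX d x1 i ∧ upX d x1 i ≤ 1) ∧ d i < upW d x1 i

lemma upW_zero (d : ℕ → ℝ) (x1 : ℝ) : upW d x1 0 = d 0 := rfl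

lemma upW_one (d : ℕ → ℝ) (x1 : ℝ) : upW d x1 1 = d 0 * x1 := rfl

lemma upW_succ2 (d : ℕ → ℝ) (x1 : ℝ) (i : ℕ) :
    upW d x1 (i+2) = upW d x1 (i+1) *
      (1 - (upW d x1 i - upW d x1 (i+1)) / (upW d x1 (i+1) - d (i+1))) := rfl

lemma upX_succ2 (d : ℕ → ℝ) (x1 : ℝ) (i : ℕ) :
    upX d x1 (i+2) = 1 - (upW d x1 i - upW d x1 (i+1)) / (upW d x1 (i+1) - d (i+1)) := rfl

lemma ratio_step (w w' r r' e : ℝ) (hw : 0 < w) (hww' : w < w') (hr' : 0 ≤ r')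
    (hrr' : r' ≤ r) (hden : e < w * (1 - r)) (he : 0 ≤ e) :
    w * (1 - r) < w' * (1 - r') ∧ 0 ≤ w' - w' * (1 - r') ∧
    (w' - w' * (1 - r')) / (w' * (1 - r') - e) ≤ (w - w * (1 - r)) / (w * (1 - r) - e) := by
  have h1r : 0 < 1 - r := by nlinarith
  have h1r' : 0 < 1 - r' := by linarith
  have hlt : w * (1 - r) < w' * (1 - r') := by nlinarith
  have hden' : 0 < w' * (1 - r') - e := by linarith
  have hdenpos : 0 < w * (1 - r) - e := by linarith
  refine ⟨hlt, by nlinarith, ?_⟩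
  rw [div_le_div_iff₀ hden' hdenpos]
  nlinarith [mul_nonneg (mul_nonneg hw.le (sub_nonneg.2 hrr'))
      (by nlinarith [mul_nonneg hw.le (le_trans hr' hrr')] : (0:ℝ) ≤ w' - e),
    mul_nonneg (mul_nonneg he hr') (by linarith : (0:ℝ) ≤ w' - w)]

/-- Feasibility is preserved when the top value `d 0` is increased; moreover all
upward shares weakly increase and all upward values strictly increase. -/
theorem feasible_of_increase_top (n : ℕ) (hn : 1 ≤ n) (d : ℕ → ℝ)
    (hd0 : 0 < d 0) (hd : ∀ i, 1 ≤ i → i ≤ n → 0 ≤ d i ∧ d i < d 0)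
    (x1 : ℝ) (hfeas : Feasible n d x1)
    (d0' : ℝ) (hd0' : d 0 < d0') :
    Feasible n (Function.update d 0 d0') x1 ∧
    ∀ i, 1 ≤ i → i ≤ n →
      upX d x1 i ≤ upX (Function.update d 0 d0') x1 i ∧
      upW d x1 i < upW (Function.update d 0 d0') x1 i := by
  obtain ⟨hx0, hx1, hfe⟩ := hfeas
  set d' := Function.update d 0 d0' with hd'def
  have hd'0 : d' 0 = d0' := Function.update_self 0 d0' d
  have hd'succ : ∀ i : ℕ, d' (i+1) = d (i+1) := fun i =>
    Function.update_of_ne (Nat.succ_ne_zero i) d0' d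
  have hWpos : ∀ i, 1 ≤ i → i ≤ n → 0 < upW d x1 i := fun i h1 h2 =>
    lt_of_le_of_lt (hd i h1 h2).1 (hfe i h1 h2).2
  -- the main induction
  have S : ∀ i, i + 1 ≤ n →
      upW d x1 (i+1) < upW d' x1 (i+1) ∧
      0 ≤ upW d' x1 i - upW d' x1 (i+1) ∧
      (upW d' x1 i - upW d' x1 (i+1)) / (upW d' x1 (i+1) - d (i+1)) ≤
        (upW d x1 i - upW d x1 (i+1)) / (upW d x1 (i+1) - d (i+1)) := by
    intro i
    induction i with
    | zero =>
      intro h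
      have h1 := (hfe 1 le_rfl h).2
      have h0 := (hd 1 le_rfl h).1
      rw [upW_one] at h1 ⊢
      have hx1pos : 0 < x1 := by nlinarith
      have hW1' : upW d' x1 1 = d0' * x1 := by rw [upW_one, hd'0]
      have hW0' : upW d' x1 0 = d0' := by rw [upW_zero, hd'0]
      have hden : 0 < d 0 * x1 - d 1 := by linarith
      have hden' : 0 < d0' * x1 - d 1 := by nlinarith
      refine ⟨by rw [hW1']; nlinarith, by rw [hW1', hW0']; nlinarith, ?_⟩
      rw [hW1', hW0', upW_zero]
      rw [div_le_div_iff₀ hden' hden]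
      nlinarith [mul_nonneg (mul_nonneg (by linarith : (0:ℝ) ≤ 1 - x1) h0)
        (by linarith : (0:ℝ) ≤ d0' - d 0)]
    | succ i ih =>
      intro h
      obtain ⟨hlt, hgap, hr⟩ := ih (by omega)
      have hdlt : d (i+1) < upW d x1 (i+1) := (hfe (i+1) (by omega) (by omega)).2
      have hd1 : 0 ≤ d (i+1) := (hd (i+1) (by omega) (by omega)).1
      have hw : 0 < upW d x1 (i+1) := hWpos (i+1) (by omega) (by omega)
      have hden' : 0 < upW d' x1 (i+1) - d (i+1) := by linarith
      have hr'0 : 0 ≤ (upW d' x1 i - upW d' x1 (i+1)) / (upW d' x1 (i+1) - d (i+1)) :=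
        div_nonneg hgap hden'.le
      have hdlt2 : d (i+2) < upW d x1 (i+2) := (hfe (i+2) (by omega) h).2
      have hd2 : 0 ≤ d (i+2) := (hd (i+2) (by omega) h).1
      rw [upW_succ2] at hdlt2
      obtain ⟨c1, c2, c3⟩ := ratio_step (upW d x1 (i+1)) (upW d' x1 (i+1))
        ((upW d x1 i - upW d x1 (i+1)) / (upW d x1 (i+1) - d (i+1)))
        ((upW d' x1 i - upW d' x1 (i+1)) / (upW d' x1 (i+1) - d (i+1)))
        (d (i+2)) hw hlt hr'0 hr hdlt2 hd2
      have hW2 : upW d x1 (i+2) = upW d x1 (i+1) *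
          (1 - (upW d x1 i - upW d x1 (i+1)) / (upW d x1 (i+1) - d (i+1))) := upW_succ2 d x1 i
      have hW2' : upW d' x1 (i+2) = upW d' x1 (i+1) *
          (1 - (upW d' x1 i - upW d' x1 (i+1)) / (upW d' x1 (i+1) - d (i+1))) := by
        rw [upW_succ2, hd'succ]
      rw [hW2, hW2']
      exact ⟨c1, c2, c3⟩
  -- monotonicity / bounds of the shares with index ≥ 2
  have Xfacts : ∀ j, j + 2 ≤ n →
      upX d x1 (j+2) ≤ upX d' x1 (j+2) ∧ 0 ≤ upX d' x1 (j+2) ∧ upX d' x1 (j+2) ≤ 1 := by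
    intro j hj
    obtain ⟨hlt, hgap, hr⟩ := S j (by omega)
    have hdlt : d (j+1) < upW d x1 (j+1) := (hfe (j+1) (by omega) (by omega)).2
    have hden' : 0 < upW d' x1 (j+1) - d (j+1) := by linarith
    have hr'0 : 0 ≤ (upW d' x1 j - upW d' x1 (j+1)) / (upW d' x1 (j+1) - d (j+1)) :=
      div_nonneg hgap hden'.le
    have hX : upX d x1 (j+2) = 1 -
        (upW d x1 j - upW d x1 (j+1)) / (upW d x1 (j+1) - d (j+1)) := upX_succ2 d x1 j
    have hX' : upX d' x1 (j+2) = 1 -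
        (upW d' x1 j - upW d' x1 (j+1)) / (upW d' x1 (j+1) - d (j+1)) := by
      rw [upX_succ2, hd'succ]
    have hX0 := (hfe (j+2) (by omega) hj).1.1
    refine ⟨by rw [hX, hX']; linarith, by rw [hX'] ; rw [hX] at hX0; linarith,
      by rw [hX']; linarith⟩
  constructor
  · refine ⟨hx0, hx1, ?_⟩
    intro i h1 h2
    match i, h1 with
    | 1, _ =>
      have := (S 0 hn).1
      refine ⟨⟨hx0, hx1⟩, ?_⟩
      rw [hd'succ 0]
      exact lt_trans (hfe 1 le_rfl h2).2 this
    | (j+2), _ =>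
      obtain ⟨hm, h0, hle1⟩ := Xfacts j h2
      refine ⟨⟨h0, hle1⟩, ?_⟩
      rw [hd'succ (j+1)]
      exact lt_trans (hfe (j+2) (by omega) h2).2 (S (j+1) h2).1
  · intro i h1 h2
    match i, h1 with
    | 1, _ => exact ⟨le_refl _, (S 0 hn).1⟩
    | (j+2), _ => exact ⟨(Xfacts j h2).1, (S (j+1) h2).1⟩
end

section
/- Shares off the winning paths equal one: let v* = max_l v_l. In any fixed point of the tree bargaining equations, if t is a non-root node such that the subtree rooted at t contains no leaf of value v* (equivalently, the edge from t to its parent lies on no path from a maximum-value leaf to the root), then x_t = 1. -/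
/-- A finite rooted tree, given by a parent function: the root is its own
parent, and every node reaches the root by iterating `parent`. -/
structure BTree where
  V : Type
  [instFintype : Fintype V]
  [instDecEq : DecidableEq V]
  root : V
  parent : V → V
  parent_root : parent root = root
  reaches_root : ∀ t : V, ∃ k : ℕ, parent^[k] t = root

attribute [instance] BTree.instFintype BTree.instDecEq

/-- The children of a node `s`: the non-root nodes whose parent is `s`. -/
def BTree.children (T : BTree) (s : T.V) : Finset T.V :=
  Finset.univ.filter fun t => t ≠ T.root ∧ T.parent t = s

/-- A leaf is a node with no children. -/
def BTree.IsLeaf (T : BTree) (l : T.V) : Prop :=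
  T.children l = ∅

/-- Maximum of `f` over a finite set `F`, with value `0` when `F` is empty. -/
noncomputable def fmax {α : Type*} (F : Finset α) (f : α → ℝ) : ℝ :=
  sSup (insert 0 (f '' (F : Set α)))

/-- `w` is the value function determined by leaf values `v` and shares `x`:
`w l = v l` at each leaf `l`, and `w s = max_{t ∈ children s} x t · w t` at
each internal node `s`. -/
def IsValueFn (T : BTree) (v x w : T.V → ℝ) : Prop :=
  (∀ l, T.IsLeaf l → w l = v l) ∧
  ∀ s, ¬ T.IsLeaf s → w s = fmax (T.children s) fun t => x t * w t

/-- `wexcl T x w s t`: the maximum value reaching `s` from its children other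
than `t` (`0` when `t` is the only child). -/
noncomputable def wexcl (T : BTree) (x w : T.V → ℝ) (s t : T.V) : ℝ :=
  fmax ((T.children s).erase t) fun t' => x t' * w t'

/-- A fixed point of the tree bargaining equations: `x` is a share vector
(`x root = 0`, `x t ∈ [0,1]` off the root), `w` is the induced value function,
and for every non-root `t` with parent `s`:
`(1 − x t)·w t = (1 − x s)·(max(w_{s∖t}, x t · w t) − w_{s∖t})`. -/
def IsTreeFixedPoint (T : BTree) (v x w : T.V → ℝ) : Prop :=
  IsValueFn T v x w ∧
  x T.root = 0 ∧
  (∀ t, t ≠ T.root → 0 ≤ x t ∧ x t ≤ 1) ∧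
  ∀ t, t ≠ T.root →
    (1 - x t) * w t =
      (1 - x (T.parent t)) *
        (max (wexcl T x w (T.parent t) t) (x t * w t) - wexcl T x w (T.parent t) t)

/- ============ auxiliary lemmas ============ -/

section Fmax

lemma fmax_bddAbove {α : Type*} (F : Finset α) (f : α → ℝ) :
    BddAbove (insert 0 (f '' (F : Set α))) :=
  ((F.finite_toSet.image f).insert 0).bddAbove

lemma fmax_nonneg {α : Type*} (F : Finset α) (f : α → ℝ) : 0 ≤ fmax F f :=
  le_csSup (fmax_bddAbove F f) (Set.mem_insert _ _)

lemma le_fmax {α : Type*} {F : Finset α} (f : α → ℝ) {a : α} (ha : a ∈ F) :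
    f a ≤ fmax F f :=
  le_csSup (fmax_bddAbove F f) (Set.mem_insert_of_mem _ ⟨a, ha, rfl⟩)

lemma fmax_le {α : Type*} {F : Finset α} {f : α → ℝ} {b : ℝ} (hb : 0 ≤ b)
    (h : ∀ a ∈ F, f a ≤ b) : fmax F f ≤ b := by
  apply csSup_le ⟨0, Set.mem_insert _ _⟩
  rintro y (rfl | ⟨a, ha, rfl⟩)
  · exact hb
  · exact h a ha

lemma fmax_cases {α : Type*} (F : Finset α) (f : α → ℝ) :
    fmax F f = 0 ∨ ∃ a ∈ F, fmax F f = f a := by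
  have hmem : fmax F f ∈ insert (0:ℝ) (f '' (F : Set α)) :=
    Set.Nonempty.csSup_mem ⟨0, Set.mem_insert _ _⟩ ((F.finite_toSet.image f).insert 0)
  rcases hmem with h | ⟨a, ha, h⟩
  · exact Or.inl h
  · exact Or.inr ⟨a, ha, h.symm⟩

lemma fmax_erase_le {α : Type*} [DecidableEq α] (F : Finset α) (f : α → ℝ) (c : α) :
    fmax (F.erase c) f ≤ fmax F f :=
  fmax_le (fmax_nonneg F f) fun a ha => le_fmax f (Finset.mem_of_mem_erase ha)

lemma fmax_eq_max {α : Type*} [DecidableEq α] {F : Finset α} (f : α → ℝ) {c : α}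
    (hc : c ∈ F) : fmax F f = max (f c) (fmax (F.erase c) f) := by
  apply le_antisymm
  · apply fmax_le (le_max_of_le_right (fmax_nonneg _ f))
    intro a ha
    rcases eq_or_ne a c with rfl | hne
    · exact le_max_left _ _
    · exact le_max_of_le_right (le_fmax f (Finset.mem_erase.mpr ⟨hne, ha⟩))
  · exact max_le (le_fmax f hc) (fmax_erase_le F f c)

end Fmax

section Depth

variable {T : BTree}

noncomputable def bdepth (T : BTree) (t : T.V) : ℕ := Nat.find (T.reaches_root t)

lemma bdepth_spec (t : T.V) : T.parent^[bdepth T t] t = T.root :=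
  Nat.find_spec (T.reaches_root t)

lemma bdepth_le {t : T.V} {m : ℕ} (h : T.parent^[m] t = T.root) : bdepth T t ≤ m :=
  Nat.find_le (h := T.reaches_root t) h

lemma bdepth_eq_zero_iff (t : T.V) : bdepth T t = 0 ↔ t = T.root := by
  constructor
  · intro h
    have := bdepth_spec (T := T) t
    rw [h] at this
    simpa using this
  · intro h
    subst h
    exact Nat.eq_zero_of_le_zero (bdepth_le (by simp))

lemma bdepth_lt_card (t : T.V) : bdepth T t < Fintype.card T.V := by
  have key : ∀ i j : ℕ, i ≤ j → j ≤ bdepth T t →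
      T.parent^[i] t = T.parent^[j] t → i = j := by
    intro i j hij hjd heq
    by_contra hne
    have hlt : i < j := lt_of_le_of_ne hij hne
    have h1 : T.parent^[bdepth T t - j + i] t = T.root := by
      have h2 : T.parent^[bdepth T t - j] (T.parent^[j] t) = T.root := by
        rw [← Function.iterate_add_apply, Nat.sub_add_cancel hjd]
        exact bdepth_spec t
      rw [← heq, ← Function.iterate_add_apply] at h2
      exact h2
    have := bdepth_le h1
    omega
  have hinj : Function.Injective (fun i : Fin (bdepth T t + 1) => T.parent^[(i:ℕ)] t) := by
    intro i j h
    rcases le_total (i:ℕ) (j:ℕ) with hle | hle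
    · exact Fin.ext (key i j hle (Nat.lt_succ_iff.mp j.isLt) h)
    · exact (Fin.ext (key j i hle (Nat.lt_succ_iff.mp i.isLt) h.symm)).symm
  have := Fintype.card_le_of_injective _ hinj
  simpa using this

lemma bdepth_parent_lt {c : T.V} (hc : c ≠ T.root) :
    bdepth T (T.parent c) + 1 ≤ bdepth T c := by
  have h1 : 1 ≤ bdepth T c := by
    rcases Nat.eq_zero_or_pos (bdepth T c) with h | h
    · exact absurd ((bdepth_eq_zero_iff c).mp h) hc
    · exact h
  have h2 : T.parent^[bdepth T c - 1] (T.parent c) = T.root := by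
    have h4 := bdepth_spec c
    rw [show bdepth T c = (bdepth T c - 1) + 1 by omega,
      Function.iterate_succ_apply] at h4
    exact h4
  have := bdepth_le h2
  omega

lemma btree_rec (P : T.V → Prop)
    (step : ∀ s, (∀ c ∈ T.children s, P c) → P s) : ∀ t, P t := by
  have key : ∀ m : ℕ, ∀ t : T.V, Fintype.card T.V ≤ bdepth T t + m → P t := by
    intro m
    induction m with
    | zero =>
      intro t h
      exact absurd (bdepth_lt_card t) (by omega)
    | succ m ih =>
      intro t h
      apply step
      intro c hc
      have hc' : c ≠ T.root ∧ T.parent c = t := by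
        simpa [BTree.children] using hc
      apply ih
      have := bdepth_parent_lt hc'.1
      rw [hc'.2] at this
      omega
  intro t
  exact key (Fintype.card T.V) t (by omega)

end Depth

section FP

variable {T : BTree} {v x w : T.V → ℝ}

lemma w_pos (hv : ∀ l, T.IsLeaf l → 0 < v l) (hfp : IsTreeFixedPoint T v x w) :
    ∀ t, 0 < w t := by
  obtain ⟨⟨hleaf, hint⟩, hxr, hx01, heq⟩ := hfp
  apply btree_rec
  intro s ih
  by_cases hs : T.IsLeaf s
  · rw [hleaf s hs]; exact hv s hs
  · rw [hint s hs]
    have hne : (T.children s).Nonempty := Finset.nonempty_iff_ne_empty.mpr hs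
    by_contra hle
    push_neg at hle
    have h0 : fmax (T.children s) (fun t => x t * w t) = 0 :=
      le_antisymm hle (fmax_nonneg _ _)
    obtain ⟨c, hc⟩ := hne
    have hcr : c ≠ T.root := (Finset.mem_filter.mp hc).2.1
    have hcp : T.parent c = s := (Finset.mem_filter.mp hc).2.2
    have hwc : 0 < w c := ih c hc
    have hxc0 : x c * w c = 0 := by
      have h1 := le_fmax (fun t => x t * w t) hc
      rw [h0] at h1
      exact le_antisymm h1 (mul_nonneg (hx01 c hcr).1 hwc.le)
    have hexcl : wexcl T x w s c = 0 := by
      refine le_antisymm (fmax_le le_rfl ?_) (fmax_nonneg _ _)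
      intro a ha
      have h1 := le_fmax (fun t => x t * w t) (Finset.mem_of_mem_erase ha)
      rw [h0] at h1
      exact h1
    have heqc := heq c hcr
    rw [hcp, hexcl, hxc0] at heqc
    simp at heqc
    rcases heqc with h | h
    · rw [show x c = 1 by linarith, one_mul] at hxc0
      exact hwc.ne' hxc0
    · exact hwc.ne' h

lemma w_le_leaf (hv : ∀ l, T.IsLeaf l → 0 < v l) (hfp : IsTreeFixedPoint T v x w) :
    ∀ t, ∃ l, T.IsLeaf l ∧ (∃ k : ℕ, T.parent^[k] l = t) ∧ w t ≤ v l := by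
  have hwpos := w_pos hv hfp
  obtain ⟨⟨hleaf, hint⟩, hxr, hx01, heq⟩ := hfp
  apply btree_rec
  intro s ih
  by_cases hs : T.IsLeaf s
  · exact ⟨s, hs, ⟨0, rfl⟩, (hleaf s hs).le⟩
  · have hws : w s = fmax (T.children s) (fun t => x t * w t) := hint s hs
    rcases fmax_cases (T.children s) (fun t => x t * w t) with h0 | ⟨c, hc, hcmax⟩
    · exact absurd (hws.trans h0) (hwpos s).ne'
    · obtain ⟨l, hl, ⟨k, hk⟩, hle⟩ := ih c hc
      have hcr : c ≠ T.root := (Finset.mem_filter.mp hc).2.1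
      have hcp : T.parent c = s := (Finset.mem_filter.mp hc).2.2
      refine ⟨l, hl, ⟨k+1, ?_⟩, ?_⟩
      · rw [Function.iterate_succ_apply', hk, hcp]
      · have hxw : x c * w c ≤ w c := by
          nlinarith [(hx01 c hcr).2, hwpos c]
        have : w s ≤ w c := by rw [hws, hcmax]; exact hxw
        linarith

lemma strict_max_child (hfp : IsTreeFixedPoint T v x w) (hwpos : ∀ t, 0 < w t)
    {u : T.V} (hu : u ≠ T.root) (hxu : x u < 1) :
    wexcl T x w (T.parent u) u < x u * w u ∧
      w (T.parent u) = x u * w u ∧ x (T.parent u) < 1 := by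
  obtain ⟨⟨hleaf, hint⟩, hxr, hx01, heq⟩ := hfp
  have hwu := hwpos u
  have heq' := heq u hu
  have hL : 0 < (1 - x u) * w u := mul_pos (by linarith) hwu
  have hlt : wexcl T x w (T.parent u) u < x u * w u := by
    by_contra h
    push_neg at h
    rw [max_eq_left h] at heq'
    simp at heq'
    rcases heq' with h' | h' <;> linarith
  rw [max_eq_right hlt.le] at heq'
  have hdiff : 0 < x u * w u - wexcl T x w (T.parent u) u := by linarith
  have hxs : x (T.parent u) < 1 := by nlinarith
  have humem : u ∈ T.children (T.parent u) :=
    Finset.mem_filter.mpr ⟨Finset.mem_univ u, hu, rfl⟩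
  have hsnl : ¬ T.IsLeaf (T.parent u) := by
    intro h
    rw [BTree.IsLeaf] at h
    rw [h] at humem
    simp at humem
  refine ⟨hlt, ?_, hxs⟩
  rw [hint _ hsnl, fmax_eq_max _ humem]
  exact max_eq_left hlt.le

lemma chain_up (hfp : IsTreeFixedPoint T v x w) (hwpos : ∀ t, 0 < w t)
    {t : T.V} (hxt : x t < 1) :
    ∀ j, x (T.parent^[j] t) < 1 ∧ w (T.parent^[j] t) ≤ w t := by
  intro j
  induction j with
  | zero => exact ⟨hxt, le_rfl⟩
  | succ j ih =>
    rcases eq_or_ne (T.parent^[j] t) T.root with hr | hr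
    · rw [Function.iterate_succ_apply', hr, T.parent_root, ← hr]
      exact ih
    · obtain ⟨_, hws, hxs⟩ := strict_max_child hfp hwpos hr ih.1
      rw [Function.iterate_succ_apply']
      refine ⟨hxs, ?_⟩
      rw [hws]
      have h1 : x (T.parent^[j] t) * w (T.parent^[j] t) ≤ w (T.parent^[j] t) := by
        nlinarith [hwpos (T.parent^[j] t), ih.1]
      linarith [ih.2]

end FP

/-- Shares off the winning paths equal one: if the subtree rooted at a non-root
node `t` contains no leaf of maximum value, then `x t = 1` in any fixed point. -/
theorem tree_off_path_shares_one (T : BTree) (v x w : T.V → ℝ)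
    (hv : ∀ l, T.IsLeaf l → 0 < v l) (hroot : ¬ T.IsLeaf T.root)
    (hfp : IsTreeFixedPoint T v x w)
    (lstar : T.V) (hlstar : T.IsLeaf lstar)
    (hmax : ∀ l, T.IsLeaf l → v l ≤ v lstar)
    (t : T.V) (ht : t ≠ T.root)
    (hsub : ∀ l, T.IsLeaf l → (∃ k : ℕ, T.parent^[k] l = t) → v l ≠ v lstar) :
    x t = 1 := by
  classical
  by_contra hne
  have hwpos := w_pos hv hfp
  obtain ⟨⟨hleaf, hint⟩, hxr, hx01, heq⟩ := hfp
  have hfp' : IsTreeFixedPoint T v x w := ⟨⟨hleaf, hint⟩, hxr, hx01, heq⟩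
  have hxt : x t < 1 := lt_of_le_of_ne (hx01 t ht).2 hne
  -- w t < v lstar
  obtain ⟨l, hl, hlmem, hwle⟩ := w_le_leaf hv hfp' t
  have hwt : w t < v lstar :=
    lt_of_le_of_lt hwle (lt_of_le_of_ne (hmax l hl) (hsub l hl hlmem))
  -- minimal common ancestor index j0 on t's path
  have hP : ∃ j, ∃ k, T.parent^[k] lstar = T.parent^[j] t := by
    obtain ⟨a, ha⟩ := T.reaches_root t
    obtain ⟨b, hb⟩ := T.reaches_root lstar
    exact ⟨a, b, hb.trans ha.symm⟩
  set j0 := Nat.find hP with hj0def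
  have hj0 : ∃ k, T.parent^[k] lstar = T.parent^[j0] t := Nat.find_spec hP
  have hj0pos : 0 < j0 := by
    rcases Nat.eq_zero_or_pos j0 with h | h
    · exfalso
      rw [h] at hj0
      obtain ⟨k, hk⟩ := hj0
      exact hsub lstar hlstar ⟨k, hk⟩ rfl
    · exact h
  have hchain := chain_up hfp' hwpos hxt
  set s := T.parent^[j0] t with hs
  set c' := T.parent^[j0 - 1] t with hc'
  have hpc' : T.parent c' = s := by
    rw [hc', hs, ← Function.iterate_succ_apply' T.parent (j0 - 1) t]
    congr 1
    omega
  have hc'root : c' ≠ T.root := by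
    intro h
    apply Nat.find_min hP (m := j0 - 1) (by omega)
    obtain ⟨b, hb⟩ := T.reaches_root lstar
    exact ⟨b, by rw [hb, ← hc', h]⟩
  have hxc' : x c' < 1 := (hchain (j0 - 1)).1
  have hsm := strict_max_child hfp' hwpos hc'root hxc'
  rw [hpc'] at hsm
  have hws_le : w s ≤ w t := (hchain j0).2
  -- minimal k0 with parent^[k0] lstar = s
  have hQ : ∃ k, T.parent^[k] lstar = s := hj0
  set k0 := Nat.find hQ with hk0def
  have hk0 : T.parent^[k0] lstar = s := Nat.find_spec hQ
  have hk0pos : 0 < k0 := by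
    rcases Nat.eq_zero_or_pos k0 with h | h
    · exfalso
      rw [h] at hk0
      have hmem : c' ∈ T.children s :=
        Finset.mem_filter.mpr ⟨Finset.mem_univ _, hc'root, hpc'⟩
      rw [← hk0] at hmem
      rw [BTree.IsLeaf] at hlstar
      simp only [Function.iterate_zero_apply] at hmem
      rw [hlstar] at hmem
      simp at hmem
    · exact h
  -- every node strictly below s on lstar's path is non-root
  have hdroot : ∀ i, i < k0 → T.parent^[i] lstar ≠ T.root := by
    intro i hi hroot'
    have hsr : s = T.root := by
      rw [← hk0, show k0 = (k0 - i) + i by omega, Function.iterate_add_apply,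
        hroot', Function.iterate_fixed T.parent_root]
    exact Nat.find_min hQ hi (hroot'.trans hsr.symm)
  set c := T.parent^[k0 - 1] lstar with hc
  have hpc : T.parent c = s := by
    rw [hc, ← Function.iterate_succ_apply' T.parent (k0 - 1) lstar]
    rw [show (k0 - 1).succ = k0 by omega]
    exact hk0
  have hcroot : c ≠ T.root := hdroot (k0 - 1) (by omega)
  have hcc' : c ≠ c' := by
    intro h
    exact Nat.find_min hP (m := j0 - 1) (by omega) ⟨k0 - 1, by rw [← hc, h, hc']⟩
  have hcmem : c ∈ T.children s :=
    Finset.mem_filter.mpr ⟨Finset.mem_univ _, hcroot, hpc⟩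
  have hc'mem : c' ∈ T.children s :=
    Finset.mem_filter.mpr ⟨Finset.mem_univ _, hc'root, hpc'⟩
  have hub : x c * w c ≤ wexcl T x w s c' :=
    le_fmax (fun t' => x t' * w t') (Finset.mem_erase.mpr ⟨hcc', hcmem⟩)
  have hub2 : x c * w c < v lstar := by
    calc x c * w c ≤ wexcl T x w s c' := hub
      _ < x c' * w c' := hsm.1
      _ = w s := hsm.2.1.symm
      _ ≤ w t := hws_le
      _ < v lstar := hwt
  -- c is not the max child of s, hence x c = 1
  have hxwc : x c * w c ≤ wexcl T x w s c := le_of_lt <| by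
    calc x c * w c ≤ wexcl T x w s c' := hub
      _ < x c' * w c' := hsm.1
      _ ≤ wexcl T x w s c :=
        le_fmax (fun t' => x t' * w t')
          (Finset.mem_erase.mpr ⟨fun h => hcc' h.symm, hc'mem⟩)
  have hxc1 : x c = 1 := by
    have heqc := heq c hcroot
    rw [hpc, max_eq_left hxwc] at heqc
    simp at heqc
    rcases heqc with h | h
    · linarith
    · exact absurd h (hwpos c).ne'
  -- shares are 1 all along lstar's path below c
  have hd1 : ∀ m, m ≤ k0 - 1 → x (T.parent^[k0 - 1 - m] lstar) = 1 := by
    intro m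
    induction m with
    | zero =>
      intro _
      simp only [Nat.sub_zero]
      rw [← hc]
      exact hxc1
    | succ m ih =>
      intro hm
      have hprev := ih (by omega)
      have hur : T.parent^[k0 - 1 - (m+1)] lstar ≠ T.root := hdroot _ (by omega)
      have hpu : T.parent (T.parent^[k0 - 1 - (m+1)] lstar)
          = T.parent^[k0 - 1 - m] lstar := by
        rw [← Function.iterate_succ_apply' T.parent (k0 - 1 - (m+1)) lstar]
        congr 1
        omega
      have heu := heq _ hur
      rw [hpu, hprev] at heu
      simp at heu
      rcases heu with h | h
      · linarith
      · exact absurd h (hwpos _).ne'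
  have hx1 : ∀ i, i ≤ k0 - 1 → x (T.parent^[i] lstar) = 1 := by
    intro i hi
    have := hd1 (k0 - 1 - i) (by omega)
    rwa [show k0 - 1 - (k0 - 1 - i) = i by omega] at this
  -- w grows along lstar's path
  have hw1 : ∀ i, i ≤ k0 - 1 → v lstar ≤ w (T.parent^[i] lstar) := by
    intro i
    induction i with
    | zero =>
      intro _
      simpa using (hleaf lstar hlstar).ge
    | succ i ih =>
      intro hi
      have hprev := ih (by omega)
      have hdr : T.parent^[i] lstar ≠ T.root := hdroot i (by omega)
      have hpd : T.parent (T.parent^[i] lstar) = T.parent^[i+1] lstar :=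
        (Function.iterate_succ_apply' T.parent i lstar).symm
      have hdmem : T.parent^[i] lstar ∈ T.children (T.parent^[i+1] lstar) :=
        Finset.mem_filter.mpr ⟨Finset.mem_univ _, hdr, hpd⟩
      have henl : ¬ T.IsLeaf (T.parent^[i+1] lstar) := by
        intro h
        rw [BTree.IsLeaf] at h
        rw [h] at hdmem
        simp at hdmem
      have hle2 : x (T.parent^[i] lstar) * w (T.parent^[i] lstar)
          ≤ w (T.parent^[i+1] lstar) := by
        rw [hint _ henl]
        exact le_fmax (fun t' => x t' * w t') hdmem
      rw [hx1 i (by omega), one_mul] at hle2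
      linarith
  have hclose : v lstar ≤ x c * w c := by
    rw [hxc1, one_mul, hc]
    exact hw1 (k0 - 1) le_rfl
  linarith
end
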